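/- The coefficients r_n of the unique power series solution of r(x) = x·exp(Σ_{k≥1} r(x^k)/k) satisfy (n+1)·r_{n+2} = Σ_{k=0}^{n} (k+1)·(Σ_{d | k+1} r_{(k+1)/d}/d)·r_{n−k+1} with r_1 = 1, equivalently r_{n+1} can be computed from r_1,...,r_n; in particular r_1,...,r_{10} are 1, 1, 2, 4, 9, 20, 48, 115, 286, 719. -/

import Mathlib

open PowerSeries

/-- The formal exponential `exp f = ∑_{m≥0} f^m / m!` of a power series `f`
(intended for `f` with zero constant term, where only finitely many terms
contribute to each coefficient). -/
noncomputable def expPS (f : PowerSeries ℚ) : PowerSeries ℚ :=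
  PowerSeries.mk fun n =>
    PowerSeries.coeff n (∑ m ∈ Finset.range (n + 1), (Nat.factorial m : ℚ)⁻¹ • f ^ m)

/-- The substitution `f(x^k)` of `x^k` into the power series `f` (for `k ≥ 1`). -/
noncomputable def compXPow (f : PowerSeries ℚ) (k : ℕ) : PowerSeries ℚ :=
  PowerSeries.mk fun n => if k ∣ n then PowerSeries.coeff (n / k) f else 0

/-- The sum `∑_{k≥1} f(x^k)/k`, for `f` with zero constant term: its `n`-th
coefficient is `∑_{k ∣ n} (coeff (n/k) f)/k`. -/
noncomputable def dsum (f : PowerSeries ℚ) : PowerSeries ℚ :=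
  PowerSeries.mk fun n => ∑ k ∈ n.divisors, (k : ℚ)⁻¹ * PowerSeries.coeff (n / k) f

/-- The generating function `A(x) = ∑_{a ∈ 𝒜} x^{s a}`: coefficient of `x^n` is the
number of elements of size `n`. -/
noncomputable def genFun {α : Type*} (s : α → ℕ) : PowerSeries ℚ :=
  PowerSeries.mk fun n => (Nat.card {a : α // s a = n} : ℚ)

lemma coeff_pow_zero (D : PowerSeries ℚ) (hD : PowerSeries.coeff 0 D = 0)
    {j m : ℕ} (h : j < m) : PowerSeries.coeff j (D ^ m) = 0 := by
  have hX : (X : PowerSeries ℚ) ^ m ∣ D ^ m :=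
    pow_dvd_pow_of_dvd (PowerSeries.X_dvd_iff.mpr (by rwa [← PowerSeries.coeff_zero_eq_constantCoeff_apply])) m
  exact PowerSeries.X_pow_dvd_iff.mp hX j h

lemma coeff_expPS (D : PowerSeries ℚ) (hD : PowerSeries.coeff 0 D = 0)
    {n N : ℕ} (h : n ≤ N) :
    PowerSeries.coeff n (expPS D)
      = PowerSeries.coeff n (∑ m ∈ Finset.range (N + 1), (Nat.factorial m : ℚ)⁻¹ • D ^ m) := by
  rw [expPS, PowerSeries.coeff_mk]
  rw [map_sum, map_sum]
  apply Finset.sum_subset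
  · exact Finset.range_subset_range.mpr (by omega)
  · intro m _ hm
    simp only [Finset.mem_range, not_lt] at hm
    rw [map_smul, coeff_pow_zero D hD (by omega), smul_zero]

lemma expPS_key (D : PowerSeries ℚ) (hD : PowerSeries.coeff 0 D = 0) (n : ℕ) :
    ((n : ℚ) + 1) * PowerSeries.coeff (n + 1) (expPS D)
      = ∑ k ∈ Finset.range (n + 1),
          ((k : ℚ) + 1) * PowerSeries.coeff (k + 1) D
            * PowerSeries.coeff (n - k) (expPS D) := by
  set S : ℕ → PowerSeries ℚ :=
    fun N => ∑ m ∈ Finset.range (N + 1), (Nat.factorial m : ℚ)⁻¹ • D ^ m with hS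
  have hderiv : PowerSeries.derivative ℚ (S (n + 1))
      = (PowerSeries.derivative ℚ D) * S n := by
    rw [hS]
    simp only
    rw [map_sum]
    have hcongr : ∀ m ∈ Finset.range (n + 2),
        PowerSeries.derivative ℚ ((Nat.factorial m : ℚ)⁻¹ • D ^ m)
          = ((Nat.factorial m : ℚ)⁻¹ * (m : ℚ)) • (D ^ (m - 1) * PowerSeries.derivative ℚ D) := by
      intro m _
      rw [Derivation.map_smul, Derivation.leibniz_pow, smul_eq_mul,
        ← Nat.cast_smul_eq_nsmul ℚ, smul_smul]
    rw [Finset.sum_congr rfl hcongr, Finset.sum_range_succ']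
    simp only [Nat.cast_zero, mul_zero, zero_smul, add_zero]
    rw [Finset.mul_sum]
    apply Finset.sum_congr rfl
    intro i _
    have hfac : ((Nat.factorial (i + 1) : ℚ))⁻¹ * ((i : ℕ) + 1 : ℚ)
        = ((Nat.factorial i : ℚ))⁻¹ := by
      rw [Nat.factorial_succ]
      have h1 : ((Nat.factorial i : ℚ)) ≠ 0 := by
        exact_mod_cast Nat.factorial_ne_zero i
      have h2 : ((i : ℚ) + 1) ≠ 0 := by positivity
      push_cast
      field_simp
    simp only [Nat.add_sub_cancel]
    push_cast
    rw [hfac, mul_smul_comm, mul_comm]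
  have hE : ∀ m : ℕ, m ≤ n + 1 → PowerSeries.coeff m (expPS D)
      = PowerSeries.coeff m (S (n + 1)) := fun m hm => coeff_expPS D hD hm
  have h1 : ((n : ℚ) + 1) * PowerSeries.coeff (n + 1) (expPS D)
      = PowerSeries.coeff n (PowerSeries.derivative ℚ (S (n + 1))) := by
    rw [PowerSeries.coeff_derivative, hE (n + 1) le_rfl]
    push_cast
    ring
  rw [h1, hderiv, PowerSeries.coeff_mul, Finset.Nat.sum_antidiagonal_eq_sum_range_succ_mk]
  apply Finset.sum_congr rfl
  intro k hk
  rw [PowerSeries.coeff_derivative,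
    ← coeff_expPS D hD (show n - k ≤ n from Nat.sub_le n k)]
  push_cast
  ring

/-- The coefficients of the unique power series solution of
`r(x) = x·exp(∑_{k≥1} r(x^k)/k)` satisfy the recurrence
`(n+1)·r_{n+2} = ∑_{k=0}^{n} (k+1)·(∑_{d ∣ k+1} r_{(k+1)/d}/d)·r_{n-k+1}` with
`r_1 = 1`; in particular `r_1, ..., r_10` are 1, 1, 2, 4, 9, 20, 48, 115, 286, 719. -/
theorem rooted_coeff_recurrence (r : PowerSeries ℚ)
    (h0 : PowerSeries.coeff 0 r = 0)
    (hr : r = PowerSeries.X * expPS (dsum r)) :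
    (PowerSeries.coeff 1 r = 1
      ∧ ∀ n : ℕ, ((n : ℚ) + 1) * PowerSeries.coeff (n + 2) r
          = ∑ k ∈ Finset.range (n + 1), ((k : ℚ) + 1)
              * (∑ d ∈ (k + 1).divisors, PowerSeries.coeff ((k + 1) / d) r / (d : ℚ))
              * PowerSeries.coeff (n - k + 1) r)
    ∧ (List.ofFn fun i : Fin 10 => PowerSeries.coeff ((i : ℕ) + 1) r)
        = [1, 1, 2, 4, 9, 20, 48, 115, 286, 719] := by
  have hD0 : PowerSeries.coeff 0 (dsum r) = 0 := by
    simp [dsum]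
  have hcoeff : ∀ m : ℕ, PowerSeries.coeff (m + 1) r
      = PowerSeries.coeff m (expPS (dsum r)) := by
    intro m
    conv_lhs => rw [hr]
    exact PowerSeries.coeff_succ_X_mul m _
  have h1 : PowerSeries.coeff 1 r = 1 := by
    rw [show (1:ℕ) = 0 + 1 from rfl, hcoeff 0]
    simp [expPS]
  have hrec : ∀ n : ℕ, ((n : ℚ) + 1) * PowerSeries.coeff (n + 2) r
      = ∑ k ∈ Finset.range (n + 1), ((k : ℚ) + 1)
          * (∑ d ∈ (k + 1).divisors, PowerSeries.coeff ((k + 1) / d) r / (d : ℚ))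
          * PowerSeries.coeff (n - k + 1) r := by
    intro n
    rw [show n + 2 = (n + 1) + 1 from rfl, hcoeff (n + 1), expPS_key _ hD0 n]
    apply Finset.sum_congr rfl
    intro k hk
    rw [hcoeff (n - k)]
    congr 1
    rw [dsum, PowerSeries.coeff_mk]
    congr 1
    apply Finset.sum_congr rfl
    intro d hd
    rw [div_eq_inv_mul]
  refine ⟨⟨h1, hrec⟩, ?_⟩
  have hdiv1 : (1:ℕ).divisors = {1} := by decide
  have hdiv2 : (2:ℕ).divisors = {1, 2} := by decide
  have hdiv3 : (3:ℕ).divisors = {1, 3} := by decide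
  have hdiv4 : (4:ℕ).divisors = {1, 2, 4} := by decide
  have hdiv5 : (5:ℕ).divisors = {1, 5} := by decide
  have hdiv6 : (6:ℕ).divisors = {1, 2, 3, 6} := by decide
  have hdiv7 : (7:ℕ).divisors = {1, 7} := by decide
  have hdiv8 : (8:ℕ).divisors = {1, 2, 4, 8} := by decide
  have hdiv9 : (9:ℕ).divisors = {1, 3, 9} := by decide
  have v2 : PowerSeries.coeff 2 r = 1 := by
    have h := hrec 0
    simp [Finset.sum_range_succ, hdiv1, h1] at h
    linarith
  have v3 : PowerSeries.coeff 3 r = 2 := by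
    have h := hrec 1
    simp [Finset.sum_range_succ, Finset.sum_insert, hdiv1, hdiv2, hdiv3, hdiv4, hdiv5, hdiv6, hdiv7, hdiv8, hdiv9, h1, v2] at h
    linarith
  have v4 : PowerSeries.coeff 4 r = 4 := by
    have h := hrec 2
    simp [Finset.sum_range_succ, Finset.sum_insert, hdiv1, hdiv2, hdiv3, hdiv4, hdiv5, hdiv6, hdiv7, hdiv8, hdiv9, h1, v2, v3] at h
    linarith
  have v5 : PowerSeries.coeff 5 r = 9 := by
    have h := hrec 3
    simp [Finset.sum_range_succ, Finset.sum_insert, hdiv1, hdiv2, hdiv3, hdiv4, hdiv5, hdiv6, hdiv7, hdiv8, hdiv9, h1, v2, v3, v4] at h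
    linarith
  have v6 : PowerSeries.coeff 6 r = 20 := by
    have h := hrec 4
    simp [Finset.sum_range_succ, Finset.sum_insert, hdiv1, hdiv2, hdiv3, hdiv4, hdiv5, hdiv6, hdiv7, hdiv8, hdiv9, h1, v2, v3, v4, v5] at h
    linarith
  have v7 : PowerSeries.coeff 7 r = 48 := by
    have h := hrec 5
    simp [Finset.sum_range_succ, Finset.sum_insert, hdiv1, hdiv2, hdiv3, hdiv4, hdiv5, hdiv6, hdiv7, hdiv8, hdiv9, h1, v2, v3, v4, v5, v6] at h
    linarith
  have v8 : PowerSeries.coeff 8 r = 115 := by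
    have h := hrec 6
    simp [Finset.sum_range_succ, Finset.sum_insert, hdiv1, hdiv2, hdiv3, hdiv4, hdiv5, hdiv6, hdiv7, hdiv8, hdiv9, h1, v2, v3, v4, v5, v6, v7] at h
    linarith
  have v9 : PowerSeries.coeff 9 r = 286 := by
    have h := hrec 7
    simp [Finset.sum_range_succ, Finset.sum_insert, hdiv1, hdiv2, hdiv3, hdiv4, hdiv5, hdiv6, hdiv7, hdiv8, hdiv9, h1, v2, v3, v4, v5, v6, v7, v8] at h
    linarith
  have v10 : PowerSeries.coeff 10 r = 719 := by
    have h := hrec 8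
    simp [Finset.sum_range_succ, Finset.sum_insert, hdiv1, hdiv2, hdiv3, hdiv4, hdiv5, hdiv6, hdiv7, hdiv8, hdiv9, h1, v2, v3, v4, v5, v6, v7, v8, v9] at h
    linarith
  simp [List.ofFn_succ, h1, v2, v3, v4, v5, v6, v7, v8, v9, v10]
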